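/- Let ≺ be a well-founded relation on ℕ and A : ℕ → ℕ a function. Then for each n, the tree of finite ≺-descending sequences starting at n in which the (k+1)-st element is below A applied to the maximum of n and the k-th element is finite; in particular there is a uniform bound L(n) on the length of such bounded descending sequences. -/

import Mathlib

/-- The finite sequence `l` is a `≺`-descending sequence starting at `n`, with each next
element bounded by `A (max n (previous element))`. -/
def BoundedDesc (r : ℕ → ℕ → Prop) (A : ℕ → ℕ) (n : ℕ) (l : List ℕ) : Prop :=
  (∀ h : 0 < l.length, l.getD 0 0 = n) ∧
  (∀ i : ℕ, i + 1 < l.length →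
    r (l.getD (i + 1) 0) (l.getD i 0) ∧ l.getD (i + 1) 0 < A (max n (l.getD i 0)))

private lemma key_finite (r : ℕ → ℕ → Prop) (hwf : WellFounded r) (A : ℕ → ℕ) (n : ℕ) :
    ∀ x : ℕ,
      {t : List ℕ | List.Chain' (fun a b => r b a ∧ b < A (max n a)) (x :: t)}.Finite := by
  intro x
  induction x using WellFounded.induction hwf with
  | _ x ih =>
    set R : ℕ → ℕ → Prop := fun a b => r b a ∧ b < A (max n a) with hR
    have hsub : {t : List ℕ | List.Chain' R (x :: t)} ⊆
        insert [] (⋃ y ∈ {y : ℕ | r y x ∧ y < A (max n x)},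
          (y :: ·) '' {t : List ℕ | List.Chain' R (y :: t)}) := by
      intro t ht
      match t with
      | [] => exact Set.mem_insert _ _
      | y :: t' =>
        simp only [Set.mem_setOf_eq, List.Chain', List.isChain_cons_cons] at ht
        refine Set.mem_insert_iff.mpr (Or.inr ?_)
        refine Set.mem_biUnion (show y ∈ {y : ℕ | r y x ∧ y < A (max n x)} from ht.1) ?_
        exact ⟨t', ht.2, rfl⟩
    refine Set.Finite.subset (Set.Finite.insert _ (Set.Finite.biUnion ?_ ?_)) hsub
    · exact (Set.finite_Iio (A (max n x))).subset (fun y hy => hy.2)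
    · exact fun y hy => (ih y hy.1).image _

theorem boundedDesc_finite (r : ℕ → ℕ → Prop) (hwf : WellFounded r) (A : ℕ → ℕ) :
    (∀ n : ℕ, {l : List ℕ | BoundedDesc r A n l}.Finite) ∧
    ∃ L : ℕ → ℕ, ∀ n : ℕ, ∀ l : List ℕ, BoundedDesc r A n l → l.length ≤ L n := by
  have hfin : ∀ n : ℕ, {l : List ℕ | BoundedDesc r A n l}.Finite := by
    intro n
    set R : ℕ → ℕ → Prop := fun a b => r b a ∧ b < A (max n a) with hR
    have hsub : {l : List ℕ | BoundedDesc r A n l} ⊆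
        insert [] ((n :: ·) '' {t : List ℕ | List.Chain' R (n :: t)}) := by
      intro l hl
      match l with
      | [] => exact Set.mem_insert _ _
      | a :: t =>
        obtain ⟨h1, h2⟩ := hl
        have ha : a = n := by
          have := h1 (by simp)
          simpa using this
        subst ha
        refine Set.mem_insert_iff.mpr (Or.inr ⟨t, ?_, rfl⟩)
        simp only [Set.mem_setOf_eq, List.Chain']
        rw [List.isChain_iff_getElem]
        intro i hi
        have hi' : i + 1 < (a :: t).length := by
          simp only [List.length_cons] at hi ⊢; omega
        have hi1 : i < (a :: t).length := Nat.lt_of_succ_lt hi'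
        have := h2 i hi'
        rw [List.getD_eq_getElem _ _ hi1, List.getD_eq_getElem _ _ hi'] at this
        exact ⟨this.1, this.2⟩
    exact Set.Finite.subset
      (Set.Finite.insert _ ((key_finite r hwf A n n).image _)) hsub
  refine ⟨hfin, fun n => (hfin n).toFinset.sup List.length, fun n l hl => ?_⟩
  exact Finset.le_sup ((hfin n).mem_toFinset.mpr hl)
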